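/- Let n ≥ 1 be an integer, α ∈ (0,1), η > 0, T ≥ 1, and m ≥ 1. Let p⁰ ∈ A_α, let û⁰,…,û^{T−1} ∈ ℝ^n satisfy û^t_i ≤ 0 for all t and i, and for t = 0,…,T−1 let p^{t+1} be a minimizer of q ↦ −η·⟨q, û^t⟩ + D(q‖p^t) over A_α. Let 0 = t₁ < t₂ < … < t_m < t_{m+1} = T be any partition of {0,…,T−1} into m blocks and let p^{(1)},…,p^{(m)} ∈ A_α be arbitrary comparators. Then Σ_{j=1}^m Σ_{t=t_j}^{t_{j+1}−1} ⟨p^{(j)} − p^t, û^t⟩ ≤ m·log(n/α)/η + (η/2)·Σ_{t=0}^{T−1} Σ_{i=1}^n p^t_i·(û^t_i)². -/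

import Mathlib

open Finset

/-- Unnormalized negative-entropy Bregman divergence
`D(x‖y) = ∑ i, (x i * log (x i / y i) - x i + y i)` (with `0·log 0 = 0`,
which holds automatically since `Real.log 0 = 0`). -/
noncomputable def breg {n : ℕ} (x y : Fin n → ℝ) : ℝ :=
  ∑ i, (x i * Real.log (x i / y i) - x i + y i)

/-- The clipped simplex `A_α = {x : ∑ i, x i = 1 ∧ ∀ i, x i ≥ α / n}`. -/
def clippedSimplex (n : ℕ) (α : ℝ) : Set (Fin n → ℝ) :=
  {x | (∑ i, x i) = 1 ∧ ∀ i, α / n ≤ x i}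

lemma breg_nonneg {n : ℕ} {x y : Fin n → ℝ} (hx : ∀ i, 0 < x i) (hy : ∀ i, 0 < y i) :
    0 ≤ breg x y := by
  apply Finset.sum_nonneg
  intro i _
  have h1 : Real.log (y i / x i) ≤ y i / x i - 1 := Real.log_le_sub_one_of_pos (div_pos (hy i) (hx i))
  have h2 : Real.log (x i / y i) = - Real.log (y i / x i) := by
    rw [← Real.log_inv]; congr 1; field_simp
  rw [h2]
  have := mul_le_mul_of_nonneg_left h1 (hx i).le
  have hxx : x i * (y i / x i - 1) = y i - x i := by
    rw [mul_sub, mul_div_cancel₀ _ (hx i).ne', mul_one]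
  nlinarith [hx i, hy i]

lemma breg_le_log {n : ℕ} (hn : 1 ≤ n) {α : ℝ} (hα0 : 0 < α) {x y : Fin n → ℝ}
    (hx : x ∈ clippedSimplex n α) (hy : y ∈ clippedSimplex n α) :
    breg x y ≤ Real.log (n / α) := by
  have hnpos : (0:ℝ) < n := by exact_mod_cast hn
  have hαn : 0 < α / n := by positivity
  obtain ⟨hxs, hxl⟩ := hx
  obtain ⟨hys, hyl⟩ := hy
  have hsum : breg x y = ∑ i, x i * Real.log (x i / y i) := by
    unfold breg
    rw [Finset.sum_add_distrib, Finset.sum_sub_distrib, hxs, hys]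
    ring
  rw [hsum]
  calc ∑ i, x i * Real.log (x i / y i) ≤ ∑ i, x i * Real.log (n / α) := by
        apply Finset.sum_le_sum
        intro i _
        have hxi : 0 < x i := lt_of_lt_of_le hαn (hxl i)
        have hyi : 0 < y i := lt_of_lt_of_le hαn (hyl i)
        apply mul_le_mul_of_nonneg_left _ hxi.le
        rw [Real.log_div hxi.ne' hyi.ne', Real.log_div (by positivity) hα0.ne']
        have hx1 : x i ≤ 1 := by
          rw [← hxs]
          exact Finset.single_le_sum (fun j _ => le_of_lt (lt_of_lt_of_le hαn (hxl j)))
            (Finset.mem_univ i)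
        have hlx : Real.log (x i) ≤ 0 := Real.log_nonpos hxi.le hx1
        have hly : Real.log (α / n) ≤ Real.log (y i) := Real.log_le_log hαn (hyl i)
        rw [Real.log_div hα0.ne' hnpos.ne'] at hly
        linarith
    _ = Real.log (n / α) := by rw [← Finset.sum_mul, hxs, one_mul]


lemma exp_le_quad {c : ℝ} (hc : c ≤ 0) : Real.exp c ≤ 1 + c + c^2/2 := by
  have h : AntitoneOn (fun x : ℝ => 1 + x + x^2/2 - Real.exp x) (Set.Iic 0) := by
    apply antitoneOn_of_deriv_nonpos (convex_Iic 0)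
    · fun_prop
    · fun_prop
    · intro x hx
      have hd : HasDerivAt (fun x : ℝ => 1 + x + x^2/2 - Real.exp x) (1 + x - Real.exp x) x := by
        have h1 : HasDerivAt (fun x : ℝ => 1 + x + x^2/2) (1 + x) x := by
          have := ((hasDerivAt_id x).const_add (1:ℝ)).fun_add ((hasDerivAt_pow 2 x).div_const 2)
          convert this using 1
          · rfl
          · rfl
          · rfl
          push_cast; ring
        simpa using h1.fun_sub (Real.hasDerivAt_exp x)
      rw [hd.deriv]
      have := Real.add_one_le_exp x
      linarith
  have h0 := h (Set.mem_Iic.2 hc) (Set.mem_Iic.2 le_rfl) hc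
  simp at h0
  nlinarith [h0]

-- coordinatewise bound: c*x - x*(log x - log y) + x ≤ y * exp c
lemma coord_bound {x y c : ℝ} (hx : 0 < x) (hy : 0 < y) :
    c * (x - y) - (x * (Real.log x - Real.log y) - x + y) ≤ y * (Real.exp c - 1 - c) := by
  have key : x * (c + 1 - (Real.log x - Real.log y)) ≤ y * Real.exp c := by
    have h1 : Real.log (y * Real.exp c / x) ≤ y * Real.exp c / x - 1 :=
      Real.log_le_sub_one_of_pos (by positivity)
    have h2 : Real.log (y * Real.exp c / x) = Real.log y + c - Real.log x := by
      rw [Real.log_div (by positivity) hx.ne', Real.log_mul hy.ne' (Real.exp_pos c).ne',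
        Real.log_exp]
    rw [h2] at h1
    have := mul_le_mul_of_nonneg_left h1 hx.le
    have hxx : x * (y * Real.exp c / x - 1) = y * Real.exp c - x := by
      field_simp
    rw [hxx] at this
    nlinarith
  nlinarith

lemma clipped_convex {n : ℕ} {α : ℝ} {x q : Fin n → ℝ} (hx : x ∈ clippedSimplex n α)
    (hq : q ∈ clippedSimplex n α) {s : ℝ} (hs0 : 0 ≤ s) (hs1 : s ≤ 1) :
    (fun i => x i + s * (q i - x i)) ∈ clippedSimplex n α := by
  constructor
  · rw [Finset.sum_add_distrib, ← Finset.mul_sum, Finset.sum_sub_distrib, hx.1, hq.1]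
    ring
  · intro i
    have := hx.2 i; have := hq.2 i
    nlinarith

lemma varineq {n : ℕ} {α η : ℝ} (hαn : 0 < α / (n:ℝ)) {u x y q : Fin n → ℝ}
    (hx : x ∈ clippedSimplex n α) (hy : ∀ i, 0 < y i) (hq : q ∈ clippedSimplex n α)
    (hmin : ∀ r ∈ clippedSimplex n α,
      -η * (∑ i, x i * u i) + breg x y ≤ -η * (∑ i, r i * u i) + breg r y) :
    0 ≤ ∑ i, (q i - x i) * (-η * u i + (Real.log (x i) - Real.log (y i))) := by
  have hxp : ∀ i, 0 < x i := fun i => lt_of_lt_of_le hαn (hx.2 i)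
  set d : Fin n → ℝ := fun i => q i - x i with hd
  set f : ℝ → ℝ := fun s =>
    -η * (∑ i, (x i + s * d i) * u i) + breg (fun i => x i + s * d i) y with hf
  -- derivative of f at 0
  have hder : HasDerivAt f (∑ i, d i * (-η * u i + (Real.log (x i) - Real.log (y i)))) 0 := by
    have h1 : HasDerivAt (fun s : ℝ => ∑ i, (x i + s * d i) * u i) (∑ i, d i * u i) 0 := by
      apply HasDerivAt.fun_sum
      intro i _
      have : HasDerivAt (fun s : ℝ => x i + s * d i) (d i) 0 :=
        ((hasDerivAt_id (0:ℝ)).mul_const (d i)).const_add (x i) |>.congr_deriv (by simp)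
      exact this.mul_const (u i)
    have h2 : HasDerivAt (fun s : ℝ => breg (fun i => x i + s * d i) y)
        (∑ i, d i * (Real.log (x i) - Real.log (y i))) 0 := by
      unfold breg
      apply HasDerivAt.fun_sum
      intro i _
      have hw : HasDerivAt (fun s : ℝ => x i + s * d i) (d i) 0 :=
        ((hasDerivAt_id (0:ℝ)).mul_const (d i)).const_add (x i) |>.congr_deriv (by simp)
      have hφ : HasDerivAt (fun w : ℝ => w * Real.log (w / y i) - w + y i)
          (Real.log (x i) - Real.log (y i)) (x i) := by
        have heq : (fun w : ℝ => w * Real.log (w / y i) - w + y i)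
            = fun w : ℝ => w * (Real.log w - Real.log (y i)) - w + y i := by
          funext w
          rcases eq_or_ne w 0 with h | h
          · simp [h]
          · rw [Real.log_div h (hy i).ne']
        rw [heq]
        have := ((hasDerivAt_id (x i)).fun_mul
          ((Real.hasDerivAt_log (hxp i).ne').sub_const (Real.log (y i))))
        have h3 := (this.fun_sub (hasDerivAt_id (x i))).add_const (y i)
        convert h3 using 1
        · rfl
        · rfl
        · rfl
        simp only [id_eq]
        rw [mul_inv_cancel₀ (hxp i).ne']
        ring
      have hφ' : HasDerivAt (fun w : ℝ => w * Real.log (w / y i) - w + y i)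
          (Real.log (x i) - Real.log (y i)) (x i + 0 * d i) := by simpa using hφ
      have := hφ'.comp 0 hw
      simpa [mul_comm, Function.comp_def] using this
    have := (h1.const_mul (-η)).fun_add h2
    convert this using 1
    · rfl
    · rfl
    rw [Finset.mul_sum, ← Finset.sum_add_distrib]
    apply Finset.sum_congr rfl
    intro i _
    ring
  -- slope nonneg on (0,1]
  have hslope : Filter.Tendsto (slope f 0) (nhdsWithin 0 (Set.Ioi 0))
      (nhds (∑ i, d i * (-η * u i + (Real.log (x i) - Real.log (y i))))) := by
    have := hasDerivAt_iff_tendsto_slope.1 hder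
    exact this.mono_left (nhdsWithin_mono 0 (fun s hs => ne_of_gt hs))
  have hnonneg : ∀ᶠ s in nhdsWithin 0 (Set.Ioi 0), 0 ≤ slope f 0 s := by
    filter_upwards [Ioc_mem_nhdsGT_of_mem (Set.mem_Ico.2 ⟨le_refl 0, zero_lt_one⟩)]
      with s hs
    have hz := clipped_convex hx hq hs.1.le hs.2
    have hle : f 0 ≤ f s := by
      have h0 : f 0 = -η * (∑ i, x i * u i) + breg x y := by
        simp only [hf]; norm_num
      rw [h0]
      exact hmin _ hz
    rw [slope_def_field]
    simp only [sub_zero]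
    exact div_nonneg (by linarith) hs.1.le
  have key := ge_of_tendsto hslope hnonneg
  calc (0:ℝ) ≤ ∑ i, d i * (-η * u i + (Real.log (x i) - Real.log (y i))) := key
    _ = _ := by apply Finset.sum_congr rfl; intro i _; rw [hd]

lemma step_lemma {n : ℕ} {α η : ℝ} (hαn : 0 < α / (n:ℝ)) (hη : 0 < η) {u x y q : Fin n → ℝ}
    (hx : x ∈ clippedSimplex n α) (hy : y ∈ clippedSimplex n α) (hq : q ∈ clippedSimplex n α)
    (hu : ∀ i, u i ≤ 0)
    (hmin : ∀ r ∈ clippedSimplex n α,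
      -η * (∑ i, x i * u i) + breg x y ≤ -η * (∑ i, r i * u i) + breg r y) :
    η * ∑ i, (q i - y i) * u i ≤
      breg q y - breg q x + η^2/2 * ∑ i, y i * u i ^ 2 := by
  have hxp : ∀ i, 0 < x i := fun i => lt_of_lt_of_le hαn (hx.2 i)
  have hyp : ∀ i, 0 < y i := fun i => lt_of_lt_of_le hαn (hy.2 i)
  have hqp : ∀ i, 0 < q i := fun i => lt_of_lt_of_le hαn (hq.2 i)
  have hvi := varineq hαn hx hyp hq hmin
  -- three-point identity
  have htp : breg q y - breg q x - breg x y
      = ∑ i, (q i - x i) * (Real.log (x i) - Real.log (y i)) := by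
    unfold breg
    rw [← Finset.sum_sub_distrib, ← Finset.sum_sub_distrib]
    apply Finset.sum_congr rfl
    intro i _
    rw [Real.log_div (hqp i).ne' (hyp i).ne', Real.log_div (hqp i).ne' (hxp i).ne',
      Real.log_div (hxp i).ne' (hyp i).ne']
    ring
  have hexp : ∑ i, (q i - x i) * (-η * u i + (Real.log (x i) - Real.log (y i)))
      = -(η * (∑ i, (q i - x i) * u i)) + (breg q y - breg q x - breg x y) := by
    rw [htp, neg_mul_eq_neg_mul, Finset.mul_sum, ← Finset.sum_add_distrib]
    apply Finset.sum_congr rfl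
    intro i _
    ring
  rw [hexp] at hvi
  have h1 : η * (∑ i, (q i - x i) * u i) ≤ breg q y - breg q x - breg x y := by linarith
  -- second-order term bound
  have h2 : η * (∑ i, (x i - y i) * u i) - breg x y ≤ η^2/2 * ∑ i, y i * u i ^ 2 := by
    have hb : breg x y = ∑ i, (x i * (Real.log (x i) - Real.log (y i)) - x i + y i) := by
      unfold breg
      apply Finset.sum_congr rfl
      intro i _
      rw [Real.log_div (hxp i).ne' (hyp i).ne']
    have hterm : ∀ i ∈ Finset.univ,
        (η * u i) * (x i - y i) - (x i * (Real.log (x i) - Real.log (y i)) - x i + y i)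
          ≤ η^2/2 * (y i * u i ^ 2) := by
      intro i _
      have hc : η * u i ≤ 0 := mul_nonpos_of_nonneg_of_nonpos hη.le (hu i)
      have hcb := coord_bound (hxp i) (hyp i) (c := η * u i)
      have heq := exp_le_quad hc
      have hyi := hyp i
      nlinarith [hyp i, sq_nonneg (η * u i)]
    have hsum := Finset.sum_le_sum hterm
    calc η * (∑ i, (x i - y i) * u i) - breg x y
        = ∑ i, ((η * u i) * (x i - y i)
            - (x i * (Real.log (x i) - Real.log (y i)) - x i + y i)) := by
          rw [hb, Finset.mul_sum, ← Finset.sum_sub_distrib]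
          apply Finset.sum_congr rfl
          intro i _
          ring
      _ ≤ ∑ i, η^2/2 * (y i * u i ^ 2) := hsum
      _ = η^2/2 * ∑ i, y i * u i ^ 2 := by rw [Finset.mul_sum]
  have h3 : ∑ i, (q i - y i) * u i
      = (∑ i, (q i - x i) * u i) + (∑ i, (x i - y i) * u i) := by
    rw [← Finset.sum_add_distrib]
    apply Finset.sum_congr rfl
    intro i _
    ring
  rw [h3, mul_add]
  linarith

lemma teles (g : ℕ → ℝ) : ∀ a b : ℕ, a ≤ b →
    ∑ t ∈ Finset.Ico a b, (g t - g (t+1)) = g a - g b := by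
  intro a b hab
  induction b, hab using Nat.le_induction with
  | base => simp
  | succ b hab ih =>
    rw [Finset.sum_Ico_succ_top (by omega), ih]
    ring

lemma part (G : ℕ → ℝ) (tsn : ℕ → ℕ) (hmono : Monotone tsn) : ∀ M : ℕ,
    ∑ j ∈ Finset.range M, ∑ t ∈ Finset.Ico (tsn j) (tsn (j+1)), G t
      = ∑ t ∈ Finset.Ico (tsn 0) (tsn M), G t := by
  intro M
  induction M with
  | zero => simp
  | succ M ih =>
    rw [Finset.sum_range_succ, ih,
      Finset.sum_Ico_consecutive _ (hmono (Nat.zero_le M)) (hmono (Nat.le_succ M))]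

theorem stmt_12 (n : ℕ) (hn : 1 ≤ n) (α η : ℝ) (hα : 0 < α ∧ α < 1) (hη : 0 < η)
    (T m : ℕ) (hT : 1 ≤ T) (hm : 1 ≤ m)
    (p : ℕ → Fin n → ℝ) (hp0 : p 0 ∈ clippedSimplex n α)
    (u : ℕ → Fin n → ℝ) (hu : ∀ t i, u t i ≤ 0)
    (hmin : ∀ t < T, p (t + 1) ∈ clippedSimplex n α ∧
      ∀ q ∈ clippedSimplex n α,
        -η * (∑ i, p (t + 1) i * u t i) + breg (p (t + 1)) (p t) ≤
          -η * (∑ i, q i * u t i) + breg q (p t))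
    (ts : Fin (m + 1) → ℕ) (hts0 : ts 0 = 0) (htsT : ts (Fin.last m) = T)
    (htsmono : StrictMono ts)
    (pc : Fin m → Fin n → ℝ) (hpc : ∀ j, pc j ∈ clippedSimplex n α) :
    ∑ j : Fin m, ∑ t ∈ Finset.Ico (ts j.castSucc) (ts j.succ),
        ∑ i, (pc j i - p t i) * u t i ≤
      m * Real.log (n / α) / η + η / 2 * ∑ t ∈ Finset.range T, ∑ i, p t i * u t i ^ 2 := by
  have hnpos : (0:ℝ) < n := by exact_mod_cast hn
  have hαn : 0 < α / (n:ℝ) := div_pos hα.1 hnpos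
  -- all iterates stay in the clipped simplex
  have hA : ∀ t, t ≤ T → p t ∈ clippedSimplex n α := by
    intro t
    induction t with
    | zero => intro _; exact hp0
    | succ k ih => intro h; exact (hmin k (by omega)).1
  -- per-step inequality
  have hstep : ∀ t < T, ∀ q ∈ clippedSimplex n α,
      ∑ i, (q i - p t i) * u t i ≤
        (breg q (p t) - breg q (p (t+1)))/η + η/2 * ∑ i, p t i * u t i ^ 2 := by
    intro t ht q hq
    have h := step_lemma hαn hη (hmin t ht).1 (hA t ht.le) hq (hu t) ((hmin t ht).2)
    have h2 : η * (∑ i, (q i - p t i) * u t i) ≤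
        η * ((breg q (p t) - breg q (p (t+1)))/η + η/2 * ∑ i, p t i * u t i ^ 2) := by
      rw [mul_add, mul_div_cancel₀ _ hη.ne']
      have he : η * (η/2 * ∑ i, p t i * u t i ^ 2) = η^2/2 * ∑ i, p t i * u t i ^ 2 := by
        ring
      linarith
    exact le_of_mul_le_mul_left h2 hη
  -- block bound
  have hblock : ∀ a b : ℕ, a ≤ b → b ≤ T → ∀ q ∈ clippedSimplex n α,
      ∑ t ∈ Finset.Ico a b, ∑ i, (q i - p t i) * u t i ≤
        Real.log (n/α)/η + η/2 * ∑ t ∈ Finset.Ico a b, ∑ i, p t i * u t i ^ 2 := by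
    intro a b hab hbT q hq
    have hqp : ∀ i, 0 < q i := fun i => lt_of_lt_of_le hαn (hq.2 i)
    have hbp : ∀ i, 0 < p b i := fun i => lt_of_lt_of_le hαn ((hA b hbT).2 i)
    calc ∑ t ∈ Finset.Ico a b, ∑ i, (q i - p t i) * u t i
        ≤ ∑ t ∈ Finset.Ico a b,
            ((breg q (p t) - breg q (p (t+1)))/η + η/2 * ∑ i, p t i * u t i ^ 2) := by
          apply Finset.sum_le_sum
          intro t ht
          exact hstep t (lt_of_lt_of_le (Finset.mem_Ico.1 ht).2 hbT) q hq
      _ = (breg q (p a) - breg q (p b))/η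
            + η/2 * ∑ t ∈ Finset.Ico a b, ∑ i, p t i * u t i ^ 2 := by
          rw [Finset.sum_add_distrib, ← Finset.sum_div, teles (fun t => breg q (p t)) a b hab,
            ← Finset.mul_sum]
      _ ≤ Real.log (n/α)/η + η/2 * ∑ t ∈ Finset.Ico a b, ∑ i, p t i * u t i ^ 2 := by
          have h1 : breg q (p a) ≤ Real.log (n/α) :=
            breg_le_log hn hα.1 hq (hA a (le_trans hab hbT))
          have h2 : 0 ≤ breg q (p b) := breg_nonneg hqp hbp
          have : (breg q (p a) - breg q (p b))/η ≤ Real.log (n/α)/η := by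
            gcongr
            linarith
          linarith
  -- natural-number reindexing of the partition points
  set tsn : ℕ → ℕ := fun k => ts ⟨min k m, Nat.lt_succ_of_le (min_le_right k m)⟩ with htsn
  have hmonotsn : Monotone tsn := by
    intro a b hab
    exact (htsmono.monotone) (Fin.mk_le_mk.2 (min_le_min hab le_rfl))
  have htsn0 : tsn 0 = 0 := by
    have : (⟨min 0 m, Nat.lt_succ_of_le (min_le_right 0 m)⟩ : Fin (m+1)) = 0 := by
      apply Fin.ext; simp
    rw [htsn]; simp only; rw [this, hts0]
  have htsnm : tsn m = T := by
    have : (⟨min m m, Nat.lt_succ_of_le (min_le_right m m)⟩ : Fin (m+1)) = Fin.last m := by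
      apply Fin.ext; simp [Fin.last]
    rw [htsn]; simp only; rw [this, htsT]
  have hcast : ∀ j : Fin m, ts j.castSucc = tsn (j:ℕ) := by
    intro j
    congr 1
    apply Fin.ext
    simp [Fin.castSucc, Fin.castAdd, Nat.min_eq_left j.isLt.le]
  have hsucc : ∀ j : Fin m, ts j.succ = tsn ((j:ℕ)+1) := by
    intro j
    congr 1
    apply Fin.ext
    simp [Fin.succ, Nat.min_eq_left j.isLt]
  have hbT' : ∀ j : Fin m, ts j.succ ≤ T := by
    intro j
    rw [← htsT]
    exact htsmono.monotone (Fin.le_last _)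
  calc ∑ j : Fin m, ∑ t ∈ Finset.Ico (ts j.castSucc) (ts j.succ),
          ∑ i, (pc j i - p t i) * u t i
      ≤ ∑ j : Fin m, (Real.log (n/α)/η
          + η/2 * ∑ t ∈ Finset.Ico (ts j.castSucc) (ts j.succ), ∑ i, p t i * u t i ^ 2) := by
        apply Finset.sum_le_sum
        intro j _
        exact hblock _ _ (htsmono.monotone (Fin.castSucc_lt_succ (i := j)).le) (hbT' j) (pc j) (hpc j)
    _ = m * Real.log (n/α)/η + η/2 * ∑ j : Fin m,
          ∑ t ∈ Finset.Ico (ts j.castSucc) (ts j.succ), ∑ i, p t i * u t i ^ 2 := by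
        rw [Finset.sum_add_distrib, Finset.sum_const, Finset.card_univ, Fintype.card_fin,
          ← Finset.mul_sum, nsmul_eq_mul]
        ring
    _ = m * Real.log (n/α)/η + η/2 * ∑ t ∈ Finset.range T, ∑ i, p t i * u t i ^ 2 := by
        congr 1
        congr 1
        have hre : ∀ j : Fin m, ∑ t ∈ Finset.Ico (ts j.castSucc) (ts j.succ),
            (∑ i, p t i * u t i ^ 2)
            = ∑ t ∈ Finset.Ico (tsn (j:ℕ)) (tsn ((j:ℕ)+1)), ∑ i, p t i * u t i ^ 2 := by
          intro j; rw [hcast j, hsucc j]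
        rw [Finset.sum_congr rfl (fun j _ => hre j)]
        rw [Fin.sum_univ_eq_sum_range
          (fun j => ∑ t ∈ Finset.Ico (tsn j) (tsn (j+1)), ∑ i, p t i * u t i ^ 2) m]
        rw [part _ tsn hmonotsn m, htsn0, htsnm, ← Finset.range_eq_Ico]
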